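/- Let H be a hypergraph and x ∈ V(H). Then, as an identity of cardinalities, #mtr(H) + #btr_x(H) = #btr_∅(H, V(H) \ {x}) + #mtr(H \ H(x)); equivalently #mtr(H) = #btr_∅(H, V(H) \ {x}) + #mtr(H \ H(x)) − #btr_x(H). -/

import Mathlib

variable {α : Type*} [DecidableEq α]

/-- The vertex set `V(H)` of a hypergraph `H`: the union of its hyperedges. -/
def verts (H : Finset (Finset α)) : Finset α := H.sup id

/-- `H(S)`: the set of hyperedges of `H` meeting `S`. -/
def edgesMeeting (H : Finset (Finset α)) (S : Finset α) : Finset (Finset α) :=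
  H.filter fun e => (e ∩ S).Nonempty

/-- `T` is a transversal of `H`: `T ⊆ V(H)` and `T` meets every hyperedge. -/
def IsTransversal (H : Finset (Finset α)) (T : Finset α) : Prop :=
  T ⊆ verts H ∧ ∀ e ∈ H, (T ∩ e).Nonempty

/-- `tr H`: the set of transversals of `H`. -/
def tr (H : Finset (Finset α)) : Finset (Finset α) :=
  (verts H).powerset.filter fun T => ∀ e ∈ H, (T ∩ e).Nonempty

/-- `mtr H`: the set of minimal transversals of `H`. -/
def mtr (H : Finset (Finset α)) : Finset (Finset α) :=
  (tr H).filter fun T => ∀ x ∈ T, T.erase x ∉ tr H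

/-- `T` is a `B`-blocked transversal of `H'`: a transversal of `H'` such that every `x ∈ T`
has a private hyperedge in `H' \ H'(B)`. -/
def IsBlockedTr (B : Finset α) (H' : Finset (Finset α)) (T : Finset α) : Prop :=
  IsTransversal H' T ∧ ∀ x ∈ T, ∃ e ∈ H' \ edgesMeeting H' B, e ∩ T = {x}

/-- `btr_B(H')`: the set of `B`-blocked transversals of `H'`. -/
def btr (B : Finset α) (H' : Finset (Finset α)) : Finset (Finset α) :=
  (tr H').filter fun T => ∀ x ∈ T, ∃ e ∈ H' \ edgesMeeting H' B, e ∩ T = {x}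

/-- `btr_B(H', S)`: the `B`-blocked transversals of `H'` included in `S`. -/
def btrS (B : Finset α) (H' : Finset (Finset α)) (S : Finset α) : Finset (Finset α) :=
  (btr B H').filter fun T => T ⊆ S

lemma mem_mtr_iff {H : Finset (Finset α)} {T : Finset α} :
    T ∈ mtr H ↔ T ⊆ verts H ∧ (∀ e ∈ H, (T ∩ e).Nonempty) ∧ ∀ y ∈ T, ∃ e ∈ H, e ∩ T = {y} := by
  simp only [mtr, tr, Finset.mem_filter, Finset.mem_powerset]
  constructor
  · rintro ⟨⟨hsub, hmeet⟩, hmin⟩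
    refine ⟨hsub, hmeet, fun y hy => ?_⟩
    have hsub' : T.erase y ⊆ verts H := (Finset.erase_subset y T).trans hsub
    have h : ¬ ∀ e ∈ H, ((T.erase y) ∩ e).Nonempty := fun hh => hmin y hy ⟨hsub', hh⟩
    push_neg at h
    obtain ⟨e, heH, hne⟩ := h
    have hempty : T.erase y ∩ e = ∅ := hne
    have hempty' := Finset.eq_empty_iff_forall_notMem.mp hempty
    refine ⟨e, heH, ?_⟩
    have hye : y ∈ e := by
      obtain ⟨z, hz⟩ := hmeet e heH
      rw [Finset.mem_inter] at hz
      by_cases hzy : z = y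
      · exact hzy ▸ hz.2
      · exact absurd (Finset.mem_inter.mpr ⟨Finset.mem_erase.mpr ⟨hzy, hz.1⟩, hz.2⟩) (hempty' z)
    ext z
    simp only [Finset.mem_inter, Finset.mem_singleton]
    constructor
    · rintro ⟨hze, hzT⟩
      by_contra hzy
      exact hempty' z (Finset.mem_inter.mpr ⟨Finset.mem_erase.mpr ⟨hzy, hzT⟩, hze⟩)
    · rintro rfl; exact ⟨hye, hy⟩
  · rintro ⟨hsub, hmeet, hpriv⟩
    refine ⟨⟨hsub, hmeet⟩, fun y hy ⟨_, hall⟩ => ?_⟩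
    obtain ⟨e, heH, hpe⟩ := hpriv y hy
    obtain ⟨z, hz⟩ := hall e heH
    rw [Finset.mem_inter, Finset.mem_erase] at hz
    have : z ∈ e ∩ T := Finset.mem_inter.mpr ⟨hz.2, hz.1.2⟩
    rw [hpe, Finset.mem_singleton] at this
    exact hz.1.1 this

lemma mem_btr_iff {B : Finset α} {H : Finset (Finset α)} {T : Finset α} :
    T ∈ btr B H ↔ T ⊆ verts H ∧ (∀ e ∈ H, (T ∩ e).Nonempty) ∧
      ∀ y ∈ T, ∃ e ∈ H \ edgesMeeting H B, e ∩ T = {y} := by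
  simp only [btr, tr, Finset.mem_filter, Finset.mem_powerset, and_assoc]

lemma btr_empty (H : Finset (Finset α)) : btr ∅ H = mtr H := by
  have hE : edgesMeeting H (∅ : Finset α) = ∅ := by
    simp [edgesMeeting]
  ext T
  rw [mem_btr_iff, mem_mtr_iff, hE, Finset.sdiff_empty]

lemma mem_Hx {H : Finset (Finset α)} {x : α} {e : Finset α} :
    e ∈ H \ edgesMeeting H {x} ↔ e ∈ H ∧ x ∉ e := by
  simp only [Finset.mem_sdiff, edgesMeeting, Finset.mem_filter]
  constructor
  · rintro ⟨he, h⟩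
    refine ⟨he, fun hxe => h ⟨he, ⟨x, Finset.mem_inter.mpr ⟨hxe, Finset.mem_singleton_self x⟩⟩⟩⟩
  · rintro ⟨he, hxe⟩
    refine ⟨he, fun ⟨_, z, hz⟩ => ?_⟩
    rw [Finset.mem_inter, Finset.mem_singleton] at hz
    exact hxe (hz.2 ▸ hz.1)

lemma mem_verts {H : Finset (Finset α)} {y : α} : y ∈ verts H ↔ ∃ e ∈ H, y ∈ e := by
  simp [verts, Finset.mem_sup]

lemma x_notin_verts {H : Finset (Finset α)} {x : α} : x ∉ verts (H \ edgesMeeting H {x}) := by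
  rw [mem_verts]
  rintro ⟨e, he, hxe⟩
  exact (mem_Hx.mp he).2 hxe

lemma card_main (H : Finset (Finset α)) (x : α) (hx : x ∈ verts H) :
    (mtr (H \ edgesMeeting H {x})).card
      = ((mtr H).filter (fun T => x ∈ T)).card + (btr {x} H).card := by
  have key : mtr (H \ edgesMeeting H {x})
      = ((mtr H).filter (fun T => x ∈ T)).image (fun T => T.erase x) ∪ btr {x} H := by
    ext S
    simp only [Finset.mem_union, Finset.mem_image, Finset.mem_filter]
    constructor
    · intro hS
      rw [mem_mtr_iff] at hS
      obtain ⟨hsub, hmeet, hpriv⟩ := hS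
      have hxS : x ∉ S := fun h => x_notin_verts (hsub h)
      by_cases hall : ∀ e ∈ H, (S ∩ e).Nonempty
      · right
        rw [mem_btr_iff]
        refine ⟨fun y hy => ?_, hall, hpriv⟩
        obtain ⟨e, he, hpe⟩ := hpriv y hy
        have hye : y ∈ e := by
          have : y ∈ e ∩ S := hpe ▸ Finset.mem_singleton_self y
          exact (Finset.mem_inter.mp this).1
        exact mem_verts.mpr ⟨e, (mem_Hx.mp he).1, hye⟩
      · left
        push_neg at hall
        obtain ⟨f, hf, hfne⟩ := hall
        have hfempty := Finset.eq_empty_iff_forall_notMem.mp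
          (hfne)
        have hxf : x ∈ f := by
          by_contra h
          exact Finset.nonempty_iff_ne_empty.mp (hmeet f (mem_Hx.mpr ⟨hf, h⟩)) hfne
        refine ⟨insert x S, ⟨?_, Finset.mem_insert_self _ _⟩, Finset.erase_insert hxS⟩
        rw [mem_mtr_iff]
        refine ⟨?_, ?_, ?_⟩
        · intro y hy
          rcases Finset.mem_insert.mp hy with rfl | hyS
          · exact hx
          · obtain ⟨e, he, hye⟩ := mem_verts.mp (hsub hyS)
            exact mem_verts.mpr ⟨e, (mem_Hx.mp he).1, hye⟩
        · intro e he
          by_cases hxe : x ∈ e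
          · exact ⟨x, Finset.mem_inter.mpr ⟨Finset.mem_insert_self _ _, hxe⟩⟩
          · obtain ⟨z, hz⟩ := hmeet e (mem_Hx.mpr ⟨he, hxe⟩)
            rw [Finset.mem_inter] at hz
            exact ⟨z, Finset.mem_inter.mpr ⟨Finset.mem_insert_of_mem hz.1, hz.2⟩⟩
        · intro y hy
          rcases Finset.mem_insert.mp hy with rfl | hyS
          · refine ⟨f, hf, ?_⟩
            ext z
            simp only [Finset.mem_inter, Finset.mem_insert, Finset.mem_singleton]
            constructor
            · rintro ⟨hzf, rfl | hzS⟩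
              · rfl
              · exact absurd (Finset.mem_inter.mpr ⟨hzS, hzf⟩) (hfempty z)
            · rintro rfl; exact ⟨hxf, Or.inl rfl⟩
          · obtain ⟨e, he, hpe⟩ := hpriv y hyS
            obtain ⟨heH, hxe⟩ := mem_Hx.mp he
            exact ⟨e, heH, by rw [Finset.inter_insert_of_notMem hxe, hpe]⟩
    · rintro (⟨T, ⟨hT, hxT⟩, rfl⟩ | hS)
      · rw [mem_mtr_iff] at hT
        obtain ⟨hsub, hmeet, hpriv⟩ := hT
        have hfact : ∀ y ∈ T.erase x, ∃ e, e ∈ H \ edgesMeeting H {x} ∧ y ∈ e ∧ e ∩ T = {y} := by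
          intro y hy
          obtain ⟨hyx, hyT⟩ := Finset.mem_erase.mp hy
          obtain ⟨e, heH, hpe⟩ := hpriv y hyT
          have hxe : x ∉ e := by
            intro hxe
            have : x ∈ e ∩ T := Finset.mem_inter.mpr ⟨hxe, hxT⟩
            rw [hpe, Finset.mem_singleton] at this
            exact hyx this.symm
          have hye : y ∈ e := by
            have : y ∈ e ∩ T := hpe ▸ Finset.mem_singleton_self y
            exact (Finset.mem_inter.mp this).1
          exact ⟨e, mem_Hx.mpr ⟨heH, hxe⟩, hye, hpe⟩
        rw [mem_mtr_iff]
        refine ⟨?_, ?_, ?_⟩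
        · intro y hy
          obtain ⟨e, he, hye, _⟩ := hfact y hy
          exact mem_verts.mpr ⟨e, he, hye⟩
        · intro e he
          obtain ⟨heH, hxe⟩ := mem_Hx.mp he
          obtain ⟨z, hz⟩ := hmeet e heH
          rw [Finset.mem_inter] at hz
          have hzx : z ≠ x := fun h => hxe (h ▸ hz.2)
          exact ⟨z, Finset.mem_inter.mpr ⟨Finset.mem_erase.mpr ⟨hzx, hz.1⟩, hz.2⟩⟩
        · intro y hy
          obtain ⟨e, he, _, hpe⟩ := hfact y hy
          refine ⟨e, he, ?_⟩
          rw [Finset.inter_erase, hpe,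
            Finset.erase_eq_of_notMem (by simp [(Finset.mem_erase.mp hy).1.symm])]
      · rw [mem_btr_iff] at hS
        obtain ⟨hsub, hmeet, hpriv⟩ := hS
        rw [mem_mtr_iff]
        refine ⟨?_, ?_, hpriv⟩
        · intro y hy
          obtain ⟨e, he, hpe⟩ := hpriv y hy
          have hye : y ∈ e := by
            have : y ∈ e ∩ S := hpe ▸ Finset.mem_singleton_self y
            exact (Finset.mem_inter.mp this).1
          exact mem_verts.mpr ⟨e, he, hye⟩
        · intro e he
          exact hmeet e (mem_Hx.mp he).1
  have hdisj : Disjoint (((mtr H).filter (fun T => x ∈ T)).image (fun T => T.erase x))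
      (btr {x} H) := by
    rw [Finset.disjoint_left]
    rintro S hS hS'
    rw [Finset.mem_image] at hS
    obtain ⟨T, hT, rfl⟩ := hS
    rw [Finset.mem_filter] at hT
    obtain ⟨hT, hxT⟩ := hT
    rw [mem_mtr_iff] at hT
    obtain ⟨f, hf, hpf⟩ := hT.2.2 x hxT
    rw [mem_btr_iff] at hS'
    obtain ⟨z, hz⟩ := hS'.2.1 f hf
    rw [Finset.mem_inter, Finset.mem_erase] at hz
    have : z ∈ f ∩ T := Finset.mem_inter.mpr ⟨hz.2, hz.1.2⟩
    rw [hpf, Finset.mem_singleton] at this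
    exact hz.1.1 this
  rw [key, Finset.card_union_of_disjoint hdisj, Finset.card_image_of_injOn]
  intro T1 h1 T2 h2 he
  simp only [Finset.coe_filter, Set.mem_setOf_eq] at h1 h2
  have he' : T1.erase x = T2.erase x := he
  rw [← Finset.insert_erase h1.2, he', Finset.insert_erase h2.2]

/-- `#mtr(H) + #btr_x(H) = #btr_∅(H, V(H) \ {x}) + #mtr(H \ H(x))`, i.e.
`#mtr(H) = #btr_∅(H, V(H) \ {x}) + #mtr(H \ H(x)) − #btr_x(H)`. -/
theorem card_mtr_rec (H : Finset (Finset α)) (x : α) (hx : x ∈ verts H) :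
    (mtr H).card + (btr {x} H).card =
      (btrS ∅ H (verts H \ {x})).card + (mtr (H \ edgesMeeting H {x})).card := by
  have hbtrS : btrS ∅ H (verts H \ {x}) = (mtr H).filter (fun T => x ∉ T) := by
    unfold btrS
    rw [btr_empty]
    ext T
    simp only [Finset.mem_filter]
    constructor
    · rintro ⟨hT, hsub⟩
      exact ⟨hT, fun hxT => (Finset.mem_sdiff.mp (hsub hxT)).2 (Finset.mem_singleton_self x)⟩
    · rintro ⟨hT, hxT⟩
      refine ⟨hT, fun y hy => Finset.mem_sdiff.mpr ⟨(mem_mtr_iff.mp hT).1 hy, ?_⟩⟩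
      rw [Finset.mem_singleton]
      rintro rfl
      exact hxT hy
  have hsplit := Finset.card_filter_add_card_filter_not (s := mtr H)
    (p := fun T => x ∈ T)
  rw [hbtrS, card_main H x hx]
  omega
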